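/- Assume ∇ is torsion-free. For all n ≥ 1 and X_0,…,X_n ∈ L, the induced flat connection ∇' satisfies ∇'_{X_0}(X_1⊙⋯⊙X_n) ≡ X_0⊙X_1⊙⋯⊙X_n + ∇_{X_0}(X_1⊙⋯⊙X_n) modulo S^{≤ n−1}(L), where ∇_{X_0} acts on S^n(L) as a derivation. -/

import Mathlib

/-! STATEMENT 11: with `∇` torsion-free,
`∇'_{X_0}(X_1⊙⋯⊙X_n) ≡ X_0⊙X_1⊙⋯⊙X_n + ∇_{X_0}(X_1⊙⋯⊙X_n)` mod `S^{≤n−1}(L)`. -/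

noncomputable section

def EMap {L U : Type*} [Ring U] [Algebra ℚ U] (j : L → U) (nab : L → L → L) :
    (n : ℕ) → (Fin n → L) → U
  | 0, _ => 1
  | (n + 1), X =>
      (((n : ℚ) + 1)⁻¹) •
        ((∑ k : Fin (n + 1), j (X k) * EMap j nab n (X ∘ k.succAbove)) -
          ∑ k : Fin (n + 1), ∑ m : Fin n,
            EMap j nab n
              (Function.update (X ∘ k.succAbove) m (nab (X k) (X (k.succAbove m)))))

inductive SymRel (A L : Type*) [CommRing A] [AddCommGroup L] [Module A L] :
    TensorAlgebra A L → TensorAlgebra A L → Prop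
  | mk (x y : L) :
      SymRel A L (TensorAlgebra.ι A x * TensorAlgebra.ι A y)
        (TensorAlgebra.ι A y * TensorAlgebra.ι A x)

abbrev SymmAlgebra (A L : Type*) [CommRing A] [AddCommGroup L] [Module A L] :=
  RingQuot (SymRel A L)

def ιSym (A L : Type*) [CommRing A] [AddCommGroup L] [Module A L] :
    L →ₗ[A] SymmAlgebra A L :=
  (RingQuot.mkAlgHom A (SymRel A L)).toLinearMap.comp (TensorAlgebra.ι A)

def symMonomial (A : Type*) {L : Type*} [CommRing A] [AddCommGroup L] [Module A L]
    (n : ℕ) (X : Fin n → L) : SymmAlgebra A L :=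
  (List.ofFn fun i => ιSym A L (X i)).prod

def Sfil (A L : Type*) [CommRing A] [AddCommGroup L] [Module A L] (n : ℕ) :
    Submodule A (SymmAlgebra A L) :=
  Submodule.span A
    {x | ∃ m ≤ n, ∃ X : Fin m → L, x = symMonomial A m X}

section MulComm
variable {A L : Type*} [CommRing A] [AddCommGroup L] [Module A L]

theorem symmAlgebra_mul_comm (x y : SymmAlgebra A L) : x * y = y * x := by
  obtain ⟨p, rfl⟩ := RingQuot.mkAlgHom_surjective A (SymRel A L) x
  obtain ⟨q, rfl⟩ := RingQuot.mkAlgHom_surjective A (SymRel A L) y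
  set f := RingQuot.mkAlgHom A (SymRel A L)
  have hι : ∀ (v : L) (q : TensorAlgebra A L),
      f (TensorAlgebra.ι A v) * f q = f q * f (TensorAlgebra.ι A v) := by
    intro v q
    induction q using TensorAlgebra.induction with
    | algebraMap r => rw [AlgHom.commutes]; exact (Algebra.commutes r _).symm
    | ι w =>
        have := RingQuot.mkAlgHom_rel A (SymRel.mk (A := A) (L := L) v w)
        simpa [map_mul] using this
    | mul a b ha hb => rw [map_mul, ← mul_assoc, ha, mul_assoc, hb, mul_assoc]
    | add a b ha hb => rw [map_add, mul_add, ha, hb, add_mul]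
  induction p using TensorAlgebra.induction with
  | algebraMap r => rw [AlgHom.commutes]; exact Algebra.commutes r _
  | ι v => exact hι v q
  | mul a b ha hb => rw [map_mul, mul_assoc, hb, ← mul_assoc, ha, mul_assoc]
  | add a b ha hb => rw [map_add, add_mul, ha, hb, mul_add]

end MulComm
section SymMon
variable {A L : Type*} [CommRing A] [AddCommGroup L] [Module A L]

instance symmAlgebraCommRing : CommRing (SymmAlgebra A L) :=
  { (inferInstance : Ring (SymmAlgebra A L)) with mul_comm := symmAlgebra_mul_comm }

theorem symMonomial_eq_prod (n : ℕ) (X : Fin n → L) :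
    symMonomial A n X = ∏ i, ιSym A L (X i) := List.prod_ofFn

theorem symMonomial_cons (n : ℕ) (x : L) (V : Fin n → L) :
    symMonomial A (n + 1) (Fin.cons x V) = ιSym A L x * symMonomial A n V := by
  rw [symMonomial, List.ofFn_succ]
  simp [symMonomial, Fin.cons_succ]

theorem update_comp_succAbove {α : Type*} {k : ℕ} (Z : Fin (k + 1) → α) (i : Fin (k + 1))
    (q : Fin k) (v : α) :
    Function.update Z (i.succAbove q) v ∘ i.succAbove = Function.update (Z ∘ i.succAbove) q v := by
  funext q'
  by_cases h : q' = q
  · subst h; simp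
  · have h2 : i.succAbove q' ≠ i.succAbove q := fun hc => h (Fin.succAbove_right_injective hc)
    simp [Function.update_of_ne h, Function.update_of_ne h2]

theorem symMonomial_cons_succAbove {k : ℕ} (Z : Fin (k + 1) → L) (i : Fin (k + 1)) (c : L) :
    symMonomial A (k + 1) (Fin.cons c (Z ∘ i.succAbove)) =
      symMonomial A (k + 1) (Function.update Z i c) := by
  rw [symMonomial_eq_prod, symMonomial_eq_prod, Fin.prod_univ_succ,
    Fin.prod_univ_succAbove (fun p => ιSym A L (Function.update Z i c p)) i]
  simp only [Fin.cons_zero, Function.update_self, Fin.cons_succ, Function.comp_apply]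
  congr 1
  exact Finset.prod_congr rfl fun q _ => by
    rw [Function.update_of_ne (Fin.succAbove_ne i q)]

theorem symMonomial_cons_update {k : ℕ} (Z : Fin (k + 1) → L) (i : Fin (k + 1)) (q : Fin k)
    (v : L) :
    symMonomial A (k + 1) (Fin.cons (Z i) (Function.update (Z ∘ i.succAbove) q v)) =
      symMonomial A (k + 1) (Function.update Z (i.succAbove q) v) := by
  rw [symMonomial_eq_prod, symMonomial_eq_prod, Fin.prod_univ_succ,
    Fin.prod_univ_succAbove (fun p => ιSym A L (Function.update Z (i.succAbove q) v p)) i,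
    Function.update_of_ne (Fin.succAbove_ne i q).symm, ← update_comp_succAbove Z i q v]
  simp [Fin.cons_succ]

end SymMon
section FfilSec

variable {A L U : Type*} [CommRing A] [Algebra ℚ A] [AddCommGroup L] [Module A L]
  [Ring U] [Algebra ℚ U]

def Ffil (ι : A →+* U) (j : L → U) (m : ℕ) : Submodule ℚ U :=
  Submodule.span ℚ
    {u | ∃ a : A, ∃ p : ℕ, p ≤ m ∧ ∃ X : Fin p → L,
      u = ι a * (List.ofFn fun i => j (X i)).prod}

variable (ι : A →+* U) (j : L → U) (ρ : L → A → A)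

theorem Ffil_mono {m m' : ℕ} (h : m ≤ m') : Ffil ι j m ≤ Ffil ι j m' :=
  Submodule.span_mono fun u ⟨a, p, hp, X, hX⟩ => ⟨a, p, hp.trans h, X, hX⟩

theorem prod_mem_Ffil (a : A) {p m : ℕ} (hpm : p ≤ m) (X : Fin p → L) :
    ι a * (List.ofFn fun i => j (X i)).prod ∈ Ffil ι j m :=
  Submodule.subset_span ⟨a, p, hpm, X, rfl⟩

theorem one_mem_Ffil (m : ℕ) : (1 : U) ∈ Ffil ι j m := by
  have := prod_mem_Ffil ι j (1 : A) (Nat.zero_le m) (Fin.elim0 (α := L))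
  simpa using this

theorem iota_mul_mem_Ffil (a : A) {m : ℕ} {u : U} (hu : u ∈ Ffil ι j m) :
    ι a * u ∈ Ffil ι j m := by
  induction hu using Submodule.span_induction with
  | mem u hu =>
      obtain ⟨b, p, hp, X, rfl⟩ := hu
      rw [← mul_assoc, ← map_mul]
      exact prod_mem_Ffil ι j _ hp X
  | zero => simp [Submodule.zero_mem]
  | add x y hx hy ihx ihy => rw [mul_add]; exact Submodule.add_mem _ ihx ihy
  | smul q x hx ih => rw [mul_smul_comm]; exact Submodule.smul_mem _ _ ih

theorem j_mul_mem_Ffil (hcomm : ∀ (X : L) (a : A), j X * ι a = ι a * j X + ι (ρ X a))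
    (Y : L) {m : ℕ} {u : U} (hu : u ∈ Ffil ι j m) : j Y * u ∈ Ffil ι j (m + 1) := by
  induction hu using Submodule.span_induction with
  | mem u hu =>
      obtain ⟨b, p, hp, X, rfl⟩ := hu
      rw [← mul_assoc, hcomm, add_mul, mul_assoc]
      refine Submodule.add_mem _ ?_ (prod_mem_Ffil ι j _ (hp.trans (Nat.le_succ m)) X)
      refine iota_mul_mem_Ffil ι j b ?_
      have h2 := prod_mem_Ffil ι j (1 : A) (Nat.succ_le_succ hp) (Fin.cons Y X : Fin (p+1) → L)
      have hl : (List.ofFn fun i => j ((Fin.cons Y X : Fin (p+1) → L) i)).prod =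
          j Y * (List.ofFn fun i => j (X i)).prod := by
        rw [List.ofFn_succ]
        simp [Fin.cons_succ]
      rw [map_one, one_mul, hl] at h2
      exact h2
  | zero => simp [Submodule.zero_mem]
  | add x y hx hy ihx ihy => rw [mul_add]; exact Submodule.add_mem _ ihx ihy
  | smul q x hx ih => rw [mul_smul_comm]; exact Submodule.smul_mem _ _ ih

end FfilSec

section ESec
variable {A L U : Type*} [CommRing A] [Algebra ℚ A] [AddCommGroup L] [Module A L]
  [Ring U] [Algebra ℚ U]
variable (ι : A →+* U) (j : L → U) (ρ : L → A → A) (nab : L → L → L)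

theorem EMap_mem_Ffil (hcomm : ∀ (X : L) (a : A), j X * ι a = ι a * j X + ι (ρ X a)) :
    ∀ (m : ℕ) (X : Fin m → L), EMap j nab m X ∈ Ffil ι j m
  | 0, X => one_mem_Ffil ι j 0
  | (n + 1), X => by
    rw [EMap]
    refine Submodule.smul_mem _ _ (Submodule.sub_mem _ (Submodule.sum_mem _ fun k _ => ?_)
      (Submodule.sum_mem _ fun k _ => Submodule.sum_mem _ fun m _ => ?_))
    · exact j_mul_mem_Ffil ι j ρ hcomm _ (EMap_mem_Ffil hcomm n _)
    · exact Ffil_mono ι j (Nat.le_succ n) (EMap_mem_Ffil hcomm n _)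

end ESec

section ESym
variable {A L U : Type*} [CommRing A] [Algebra ℚ A] [AddCommGroup L] [Module A L]
  [Ring U] [Algebra ℚ U] [Module A U]
variable (j : L → U) (nab : L → L → L) (pbw : SymmAlgebra A L →ₗ[A] U)
variable (hpbw : ∀ (n : ℕ) (X : Fin n → L), pbw (symMonomial A n X) = EMap j nab n X)

include hpbw

theorem EMap_cons_succAbove {k : ℕ} (Z : Fin (k + 1) → L) (i : Fin (k + 1)) (c : L) :
    EMap j nab (k + 1) (Fin.cons c (Z ∘ i.succAbove)) =
      EMap j nab (k + 1) (Function.update Z i c) := by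
  rw [← hpbw, ← hpbw, symMonomial_cons_succAbove]

theorem EMap_cons_update {k : ℕ} (Z : Fin (k + 1) → L) (i : Fin (k + 1)) (q : Fin k) (v : L) :
    EMap j nab (k + 1) (Fin.cons (Z i) (Function.update (Z ∘ i.succAbove) q v)) =
      EMap j nab (k + 1) (Function.update Z (i.succAbove q) v) := by
  rw [← hpbw, ← hpbw, symMonomial_cons_update]

theorem EMap_cons_sub {k : ℕ} (x y : L) (V : Fin k → L) :
    EMap j nab (k + 1) (Fin.cons (x - y) V) =
      EMap j nab (k + 1) (Fin.cons x V) - EMap j nab (k + 1) (Fin.cons y V) := by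
  rw [← hpbw, ← hpbw, ← hpbw, symMonomial_cons, symMonomial_cons, symMonomial_cons,
    map_sub, sub_mul, map_sub]

end ESym

theorem EMap_one {L U : Type*} [Ring U] [Algebra ℚ U] (j : L → U) (nab : L → L → L)
    (X : Fin 1 → L) : EMap j nab 1 X = j (X 0) := by
  rw [EMap]
  simp [EMap]

theorem EMap_rec {L U : Type*} [Ring U] [Algebra ℚ U] (j : L → U) (nab : L → L → L)
    (k : ℕ) (Y : L) (Z : Fin (k + 1) → L) :
    ((k : ℚ) + 1 + 1) • EMap j nab (k + 2) (Fin.cons Y Z) =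
      j Y * EMap j nab (k + 1) Z
      + (∑ i : Fin (k + 1), j (Z i) * EMap j nab (k + 1) (Fin.cons Y (Z ∘ i.succAbove)))
      - (∑ p : Fin (k + 1), EMap j nab (k + 1) (Function.update Z p (nab Y (Z p))))
      - (∑ i : Fin (k + 1), EMap j nab (k + 1) (Fin.cons (nab (Z i) Y) (Z ∘ i.succAbove)))
      - (∑ i : Fin (k + 1), ∑ q : Fin k,
          EMap j nab (k + 1)
            (Fin.cons Y (Function.update (Z ∘ i.succAbove) q (nab (Z i) ((Z ∘ i.succAbove) q))))) := by
  have hW0 : (Fin.cons Y Z : Fin (k + 2) → L) ∘ (0 : Fin (k + 2)).succAbove = Z := by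
    funext p; simp [Fin.succAbove_zero]
  have hWs : ∀ i : Fin (k + 1),
      (Fin.cons Y Z : Fin (k + 2) → L) ∘ (i.succ).succAbove = Fin.cons Y (Z ∘ i.succAbove) := by
    intro i; funext p
    induction p using Fin.cases with
    | zero => simp [Fin.succ_succAbove_zero]
    | succ q => simp [Fin.succ_succAbove_succ, Fin.cons_succ]
  rw [EMap, smul_smul]
  have hc : ((k : ℚ) + 1 + 1) * (((k + 1 : ℕ) : ℚ) + 1)⁻¹ = 1 := by
    push_cast
    rw [mul_inv_cancel₀]
    positivity
  rw [hc, one_smul]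
  rw [Fin.sum_univ_succ
    (f := fun k' : Fin (k + 1 + 1) => j ((Fin.cons Y Z : Fin (k + 1 + 1) → L) k') *
      EMap j nab (k + 1) ((Fin.cons Y Z : Fin (k + 1 + 1) → L) ∘ k'.succAbove))]
  rw [Fin.sum_univ_succ
    (f := fun k' : Fin (k + 1 + 1) => ∑ m : Fin (k + 1),
      EMap j nab (k + 1)
        (Function.update ((Fin.cons Y Z : Fin (k + 1 + 1) → L) ∘ k'.succAbove) m
          (nab ((Fin.cons Y Z : Fin (k + 1 + 1) → L) k')
            ((Fin.cons Y Z : Fin (k + 1 + 1) → L) (k'.succAbove m)))))]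
  have h1 : (∑ p : Fin (k + 1),
      EMap j nab (k + 1)
        (Function.update ((Fin.cons Y Z : Fin (k + 1 + 1) → L) ∘ (0 : Fin (k + 1 + 1)).succAbove) p
          (nab ((Fin.cons Y Z : Fin (k + 1 + 1) → L) 0)
            ((Fin.cons Y Z : Fin (k + 1 + 1) → L) ((0 : Fin (k + 1 + 1)).succAbove p)))))
      = ∑ p : Fin (k + 1), EMap j nab (k + 1) (Function.update Z p (nab Y (Z p))) := by
    refine Finset.sum_congr rfl fun p _ => ?_
    rw [hW0]
    simp [Fin.succAbove_zero, Fin.cons_succ]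
  have h2 : (∑ i : Fin (k + 1), ∑ m : Fin (k + 1),
      EMap j nab (k + 1)
        (Function.update ((Fin.cons Y Z : Fin (k + 1 + 1) → L) ∘ (i.succ).succAbove) m
          (nab ((Fin.cons Y Z : Fin (k + 1 + 1) → L) i.succ)
            ((Fin.cons Y Z : Fin (k + 1 + 1) → L) ((i.succ).succAbove m)))))
      = (∑ i : Fin (k + 1), EMap j nab (k + 1) (Fin.cons (nab (Z i) Y) (Z ∘ i.succAbove)))
        + ∑ i : Fin (k + 1), ∑ q : Fin k,
            EMap j nab (k + 1)
              (Fin.cons Y (Function.update (Z ∘ i.succAbove) q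
                (nab (Z i) ((Z ∘ i.succAbove) q)))) := by
    rw [← Finset.sum_add_distrib]
    refine Finset.sum_congr rfl fun i _ => ?_
    rw [Fin.sum_univ_succ]
    congr 1
    · rw [hWs i]
      simp [Fin.succ_succAbove_zero, Fin.cons_succ, Fin.update_cons_zero]
    · refine Finset.sum_congr rfl fun q _ => ?_
      rw [hWs i]
      simp only [Fin.succ_succAbove_succ, Fin.cons_succ, ← Fin.cons_update]
      simp [Function.comp]
  rw [h1, h2]
  simp only [Fin.cons_zero, Fin.cons_succ, hW0, hWs]
  abel

section KeyS
variable {A L U : Type*} [CommRing A] [Algebra ℚ A] [LieRing L] [Module A L]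
  [Ring U] [Algebra ℚ U] [Module A U]
variable (ι : A →+* U) (j : L → U) (ρ : L → A → A) (nab : L → L → L)
  (pbw : SymmAlgebra A L →ₗ[A] U)

theorem keyS_zero (Y : L) (Z : Fin 0 → L) :
    j Y * EMap j nab 0 Z - EMap j nab 1 (Fin.cons Y Z)
      - ∑ p : Fin 0, EMap j nab 0 (Function.update Z p (nab Y (Z p))) = 0 := by
  rw [EMap_one]
  simp [show EMap j nab 0 Z = (1 : U) from rfl]

theorem keyS
    (hcomm : ∀ (X : L) (a : A), j X * ι a = ι a * j X + ι (ρ X a))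
    (hbr : ∀ X Y : L, j X * j Y - j Y * j X = j ⁅X, Y⁆)
    (htf : ∀ X Y : L, nab X Y - nab Y X = ⁅X, Y⁆)
    (hpbw : ∀ (n : ℕ) (X : Fin n → L), pbw (symMonomial A n X) = EMap j nab n X) :
    ∀ (m : ℕ) (Y : L) (Z : Fin m → L),
      j Y * EMap j nab m Z - EMap j nab (m + 1) (Fin.cons Y Z)
        - ∑ p : Fin m, EMap j nab m (Function.update Z p (nab Y (Z p)))
      ∈ Ffil ι j (m - 1) := by
  intro m
  induction m with
  | zero =>
      intro Y Z
      rw [keyS_zero]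
      exact Submodule.zero_mem _
  | succ k IH =>
      intro Y Z
      have hres : ∀ (Y' : L) (V' : Fin k → L),
          (j Y' * EMap j nab k V' - EMap j nab (k + 1) (Fin.cons Y' V')
            - ∑ q : Fin k, EMap j nab k (Function.update V' q (nab Y' (V' q))))
            ∈ Ffil ι j k :=
        fun Y' V' => Ffil_mono ι j (Nat.sub_le k 1) (IH Y' V')
      have hjres : ∀ (W Y' : L) (V' : Fin k → L),
          j W * (j Y' * EMap j nab k V' - EMap j nab (k + 1) (Fin.cons Y' V')
            - ∑ q : Fin k, EMap j nab k (Function.update V' q (nab Y' (V' q))))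
            ∈ Ffil ι j k := by
        intro W Y' V'
        by_cases hk : k = 0
        · subst hk
          rw [keyS_zero, mul_zero]
          exact Submodule.zero_mem _
        · obtain ⟨r, rfl⟩ := Nat.exists_eq_succ_of_ne_zero hk
          have h := j_mul_mem_Ffil ι j ρ hcomm W (IH Y' V')
          simpa using h
      -- the member sum
      have hsum : (∑ i : Fin (k + 1),
          (j (Z i) * EMap j nab (k + 1) (Fin.cons Y (Z ∘ i.succAbove))
            - j Y * EMap j nab (k + 1) Z
            - (∑ q : Fin k, EMap j nab (k + 1)
                (Fin.cons Y (Function.update (Z ∘ i.succAbove) q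
                  (nab (Z i) ((Z ∘ i.succAbove) q)))))
            - EMap j nab (k + 1) (Fin.cons (nab (Z i) Y) (Z ∘ i.succAbove))
            + ∑ p : Fin (k + 1), EMap j nab (k + 1) (Function.update Z p (nab Y (Z p)))))
          ∈ Ffil ι j k := by
        refine Submodule.sum_mem _ fun i _ => ?_
        have r1 : j (Z i) * (j Y * EMap j nab k (Z ∘ i.succAbove))
            = j Y * (j (Z i) * EMap j nab k (Z ∘ i.succAbove))
              + j ⁅Z i, Y⁆ * EMap j nab k (Z ∘ i.succAbove) := by
          rw [← mul_assoc, ← mul_assoc, eq_add_of_sub_eq (hbr (Z i) Y), add_mul, add_comm]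
        have r2 : EMap j nab (k + 1) (Fin.cons ⁅Z i, Y⁆ (Z ∘ i.succAbove))
            = EMap j nab (k + 1) (Function.update Z i (nab (Z i) Y))
              - EMap j nab (k + 1) (Function.update Z i (nab Y (Z i))) := by
          rw [← htf (Z i) Y, EMap_cons_sub j nab pbw hpbw,
            EMap_cons_succAbove j nab pbw hpbw, EMap_cons_succAbove j nab pbw hpbw]
        have r5 : EMap j nab (k + 1) (Fin.cons (nab (Z i) Y) (Z ∘ i.succAbove))
            = EMap j nab (k + 1) (Function.update Z i (nab (Z i) Y)) :=
          EMap_cons_succAbove j nab pbw hpbw Z i _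
        have r3 : EMap j nab (k + 1) (Fin.cons (Z i) (Z ∘ i.succAbove))
            = EMap j nab (k + 1) Z := by
          rw [EMap_cons_succAbove j nab pbw hpbw, Function.update_eq_self]
        have r4 : (∑ q : Fin k, EMap j nab (k + 1)
              (Fin.cons (Z i) (Function.update (Z ∘ i.succAbove) q (nab Y ((Z ∘ i.succAbove) q)))))
            = (∑ p : Fin (k + 1), EMap j nab (k + 1) (Function.update Z p (nab Y (Z p))))
              - EMap j nab (k + 1) (Function.update Z i (nab Y (Z i))) := by
          have hq : ∀ q : Fin k, EMap j nab (k + 1)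
              (Fin.cons (Z i) (Function.update (Z ∘ i.succAbove) q (nab Y ((Z ∘ i.succAbove) q))))
              = (fun p => EMap j nab (k + 1) (Function.update Z p (nab Y (Z p)))) (i.succAbove q) := by
            intro q
            rw [EMap_cons_update j nab pbw hpbw]
            simp only [Function.comp_apply]
          rw [Finset.sum_congr rfl fun q _ => hq q]
          exact eq_sub_of_add_eq'
            ((Fin.sum_univ_succAbove
              (fun p => EMap j nab (k + 1) (Function.update Z p (nab Y (Z p)))) i).symm)
        -- memberships
        have N1 := hjres (Z i) Y (Z ∘ i.succAbove)
        have N2 := hjres Y (Z i) (Z ∘ i.succAbove)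
        have N3 := hres ⁅Z i, Y⁆ (Z ∘ i.succAbove)
        have N4 : (∑ q : Fin k, EMap j nab k
            (Function.update (Z ∘ i.succAbove) q (nab ⁅Z i, Y⁆ ((Z ∘ i.succAbove) q))))
            ∈ Ffil ι j k :=
          Submodule.sum_mem _ fun q _ => EMap_mem_Ffil ι j ρ nab hcomm k _
        have N5 := Submodule.sum_mem (Ffil ι j k)
          (fun (q : Fin k) (_ : q ∈ Finset.univ) =>
            hres Y (Function.update (Z ∘ i.succAbove) q (nab (Z i) ((Z ∘ i.succAbove) q))))
        have N6 : (∑ q : Fin k, ∑ q' : Fin k, EMap j nab k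
            (Function.update
              (Function.update (Z ∘ i.succAbove) q (nab (Z i) ((Z ∘ i.succAbove) q))) q'
              (nab Y ((Function.update (Z ∘ i.succAbove) q (nab (Z i) ((Z ∘ i.succAbove) q))) q'))))
            ∈ Ffil ι j k :=
          Submodule.sum_mem _ fun q _ => Submodule.sum_mem _ fun q' _ =>
            EMap_mem_Ffil ι j ρ nab hcomm k _
        have N7 := Submodule.sum_mem (Ffil ι j k)
          (fun (q : Fin k) (_ : q ∈ Finset.univ) =>
            hres (Z i) (Function.update (Z ∘ i.succAbove) q (nab Y ((Z ∘ i.succAbove) q))))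
        have N8 : (∑ q : Fin k, ∑ q' : Fin k, EMap j nab k
            (Function.update
              (Function.update (Z ∘ i.succAbove) q (nab Y ((Z ∘ i.succAbove) q))) q'
              (nab (Z i) ((Function.update (Z ∘ i.succAbove) q (nab Y ((Z ∘ i.succAbove) q))) q'))))
            ∈ Ffil ι j k :=
          Submodule.sum_mem _ fun q _ => Submodule.sum_mem _ fun q' _ =>
            EMap_mem_Ffil ι j ρ nab hcomm k _
        have hmem := Submodule.sub_mem _ (Submodule.sub_mem _ (Submodule.sub_mem _
          (Submodule.add_mem _ (Submodule.add_mem _ (Submodule.add_mem _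
            (Submodule.add_mem _ N2 N3) N4) N5) N6) N1) N7) N8
        convert hmem using 1
        simp only [mul_sub, Finset.mul_sum, Finset.sum_sub_distrib, r1, r2, r3, r4, r5]
        abel
      have hc : ((k : ℚ) + 1 + 1) ≠ 0 := by positivity
      have hrec := EMap_rec j nab k Y Z
      have hE : EMap j nab (k + 1 + 1) (Fin.cons Y Z)
          = ((k : ℚ) + 1 + 1)⁻¹ •
            (j Y * EMap j nab (k + 1) Z
              + (∑ i : Fin (k + 1), j (Z i) * EMap j nab (k + 1) (Fin.cons Y (Z ∘ i.succAbove)))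
              - (∑ p : Fin (k + 1), EMap j nab (k + 1) (Function.update Z p (nab Y (Z p))))
              - (∑ i : Fin (k + 1), EMap j nab (k + 1) (Fin.cons (nab (Z i) Y) (Z ∘ i.succAbove)))
              - (∑ i : Fin (k + 1), ∑ q : Fin k,
                  EMap j nab (k + 1)
                    (Fin.cons Y (Function.update (Z ∘ i.succAbove) q
                      (nab (Z i) ((Z ∘ i.succAbove) q)))))) := by
        rw [← hrec, inv_smul_smul₀ hc]
      have hT : (∑ i : Fin (k + 1),
          (j (Z i) * EMap j nab (k + 1) (Fin.cons Y (Z ∘ i.succAbove))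
            - j Y * EMap j nab (k + 1) Z
            - (∑ q : Fin k, EMap j nab (k + 1)
                (Fin.cons Y (Function.update (Z ∘ i.succAbove) q
                  (nab (Z i) ((Z ∘ i.succAbove) q)))))
            - EMap j nab (k + 1) (Fin.cons (nab (Z i) Y) (Z ∘ i.succAbove))
            + ∑ p : Fin (k + 1), EMap j nab (k + 1) (Function.update Z p (nab Y (Z p)))))
          = (∑ i : Fin (k + 1), j (Z i) * EMap j nab (k + 1) (Fin.cons Y (Z ∘ i.succAbove)))
            - ((k : ℚ) + 1) • (j Y * EMap j nab (k + 1) Z)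
            - (∑ i : Fin (k + 1), ∑ q : Fin k,
                EMap j nab (k + 1)
                  (Fin.cons Y (Function.update (Z ∘ i.succAbove) q
                    (nab (Z i) ((Z ∘ i.succAbove) q)))))
            - (∑ i : Fin (k + 1), EMap j nab (k + 1) (Fin.cons (nab (Z i) Y) (Z ∘ i.succAbove)))
            + ((k : ℚ) + 1) •
                ∑ p : Fin (k + 1), EMap j nab (k + 1) (Function.update Z p (nab Y (Z p))) := by
        simp only [Finset.sum_sub_distrib, Finset.sum_add_distrib, Finset.sum_const,
          Finset.card_univ, Fintype.card_fin]
        rw [← Nat.cast_smul_eq_nsmul ℚ, ← Nat.cast_smul_eq_nsmul ℚ]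
        push_cast
        abel
      rw [hT] at hsum
      have hfin : j Y * EMap j nab (k + 1) Z - EMap j nab (k + 1 + 1) (Fin.cons Y Z)
          - ∑ p : Fin (k + 1), EMap j nab (k + 1) (Function.update Z p (nab Y (Z p)))
          = (-(((k : ℚ) + 1 + 1)⁻¹)) •
            ((∑ i : Fin (k + 1), j (Z i) * EMap j nab (k + 1) (Fin.cons Y (Z ∘ i.succAbove)))
              - ((k : ℚ) + 1) • (j Y * EMap j nab (k + 1) Z)
              - (∑ i : Fin (k + 1), ∑ q : Fin k,
                  EMap j nab (k + 1)
                    (Fin.cons Y (Function.update (Z ∘ i.succAbove) q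
                      (nab (Z i) ((Z ∘ i.succAbove) q)))))
              - (∑ i : Fin (k + 1), EMap j nab (k + 1) (Fin.cons (nab (Z i) Y) (Z ∘ i.succAbove)))
              + ((k : ℚ) + 1) •
                  ∑ p : Fin (k + 1), EMap j nab (k + 1) (Function.update Z p (nab Y (Z p)))) := by
        rw [hE]
        match_scalars <;> field_simp <;> ring
      rw [hfin]
      exact Submodule.smul_mem _ _ hsum

end KeyS

section Transfer
variable {A L U : Type*} [CommRing A] [Algebra ℚ A] [LieRing L] [Module A L]
  [Ring U] [Algebra ℚ U] [Module A U]
variable (ι : A →+* U) (j : L → U) (ρ : L → A → A) (nab : L → L → L)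
  (pbw : SymmAlgebra A L →ₗ[A] U)

theorem rat_smul_eq (hAU : ∀ (a : A) (u : U), a • u = ι a * u) (q : ℚ) (u : U) :
    q • u = ι (algebraMap ℚ A q) * u := by
  have h : (algebraMap ℚ U) = ι.comp (algebraMap ℚ A) := Subsingleton.elim _ _
  rw [Algebra.smul_def, h]
  rfl

theorem symMonomial_mem_Sfil {q n : ℕ} (hq : q ≤ n) (Z : Fin q → L) :
    symMonomial A q Z ∈ Sfil A L n :=
  Submodule.subset_span ⟨q, hq, Z, rfl⟩

theorem Sfil_mono {n n' : ℕ} (h : n ≤ n') : Sfil A L n ≤ Sfil A L n' :=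
  Submodule.span_mono fun x ⟨m, hm, X, hX⟩ => ⟨m, hm.trans h, X, hX⟩

theorem Ffil_sub_pbw
    (hAU : ∀ (a : A) (u : U), a • u = ι a * u)
    (hcomm : ∀ (X : L) (a : A), j X * ι a = ι a * j X + ι (ρ X a))
    (hbr : ∀ X Y : L, j X * j Y - j Y * j X = j ⁅X, Y⁆)
    (htf : ∀ X Y : L, nab X Y - nab Y X = ⁅X, Y⁆)
    (hpbw : ∀ (n : ℕ) (X : Fin n → L), pbw (symMonomial A n X) = EMap j nab n X) :
    ∀ (n : ℕ) (u : U), u ∈ Ffil ι j n → ∃ s ∈ Sfil A L n, pbw s = u := by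
  intro n
  induction n with
  | zero =>
      intro u hu
      induction hu using Submodule.span_induction with
      | mem u hu =>
          obtain ⟨a, p, hp, X, rfl⟩ := hu
          interval_cases p
          refine ⟨a • symMonomial A 0 X, Submodule.smul_mem _ _ (symMonomial_mem_Sfil le_rfl X), ?_⟩
          rw [map_smul, hpbw, hAU]
          simp [show EMap j nab 0 X = (1 : U) from rfl]
      | zero => exact ⟨0, Submodule.zero_mem _, map_zero _⟩
      | add x y hx hy ihx ihy =>
          obtain ⟨s, hs, rfl⟩ := ihx; obtain ⟨t, ht, rfl⟩ := ihy
          exact ⟨s + t, Submodule.add_mem _ hs ht, map_add _ _ _⟩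
      | smul q x hx ih =>
          obtain ⟨s, hs, rfl⟩ := ih
          refine ⟨algebraMap ℚ A q • s, Submodule.smul_mem _ _ hs, ?_⟩
          rw [map_smul, hAU, rat_smul_eq ι hAU]
  | succ n IH =>
      intro u hu
      -- first: multiplying pbw-images of Sfil n by j Y stays in pbw-image of Sfil (n+1)
      have hjp : ∀ (Y : L) (s : SymmAlgebra A L), s ∈ Sfil A L n →
          ∃ s' ∈ Sfil A L (n + 1), pbw s' = j Y * pbw s := by
        intro Y s hs
        induction hs using Submodule.span_induction with
        | mem x hx =>
            obtain ⟨q, hq, Z, rfl⟩ := hx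
            have hr := keyS ι j ρ nab pbw hcomm hbr htf hpbw q Y Z
            have hr' : (j Y * EMap j nab q Z - EMap j nab (q + 1) (Fin.cons Y Z)
                - ∑ p : Fin q, EMap j nab q (Function.update Z p (nab Y (Z p))))
                ∈ Ffil ι j n := Ffil_mono ι j (le_trans (Nat.sub_le q 1) hq) hr
            obtain ⟨t, ht, hpt⟩ := IH _ hr'
            refine ⟨symMonomial A (q + 1) (Fin.cons Y Z)
              + ∑ p : Fin q, symMonomial A q (Function.update Z p (nab Y (Z p))) + t,
              Submodule.add_mem _ (Submodule.add_mem _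
                (symMonomial_mem_Sfil (Nat.succ_le_succ hq) _)
                (Submodule.sum_mem _ fun p _ =>
                  symMonomial_mem_Sfil (hq.trans (Nat.le_succ n)) _))
                (Sfil_mono (Nat.le_succ n) ht), ?_⟩
            rw [map_add, map_add, map_sum, hpbw, hpbw, hpt]
            simp only [hpbw]
            abel
        | zero => exact ⟨0, Submodule.zero_mem _, by simp⟩
        | add x y hx hy ihx ihy =>
            obtain ⟨s₁, hs₁, hp₁⟩ := ihx; obtain ⟨s₂, hs₂, hp₂⟩ := ihy
            exact ⟨s₁ + s₂, Submodule.add_mem _ hs₁ hs₂, by rw [map_add, hp₁, hp₂, map_add, mul_add]⟩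
        | smul a x hx ih =>
            obtain ⟨s', hs', hp'⟩ := ih
            refine ⟨a • s' + ρ Y a • x, Submodule.add_mem _ (Submodule.smul_mem _ _ hs')
              (Submodule.smul_mem _ _ (Sfil_mono (Nat.le_succ n) hx)), ?_⟩
            rw [map_add, map_smul, map_smul, hp', map_smul]
            simp only [hAU]
            conv_rhs => rw [← mul_assoc, hcomm, add_mul, mul_assoc]
      induction hu using Submodule.span_induction with
      | mem u hu =>
          obtain ⟨a, p, hp, X, rfl⟩ := hu
          rcases Nat.lt_or_ge p (n + 1) with hlt | hge
          · have : (ι a * (List.ofFn fun i => j (X i)).prod) ∈ Ffil ι j n :=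
              prod_mem_Ffil ι j a (Nat.lt_succ_iff.mp hlt) X
            obtain ⟨s, hs, hps⟩ := IH _ this
            exact ⟨s, Sfil_mono (Nat.le_succ n) hs, hps⟩
          · have hpe : p = n + 1 := le_antisymm hp hge
            subst hpe
            have htail : ((List.ofFn fun i => j ((X ∘ Fin.succ) i)).prod) ∈ Ffil ι j n := by
              have := prod_mem_Ffil ι j (1 : A) (le_refl n) (X ∘ Fin.succ)
              simpa using this
            obtain ⟨s, hs, hps⟩ := IH _ htail
            obtain ⟨s', hs', hps'⟩ := hjp (X 0) s hs
            refine ⟨a • s', Submodule.smul_mem _ _ hs', ?_⟩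
            rw [map_smul, hAU, hps', hps, List.ofFn_succ]
            simp [mul_assoc]
      | zero => exact ⟨0, Submodule.zero_mem _, map_zero _⟩
      | add x y hx hy ihx ihy =>
          obtain ⟨s, hs, rfl⟩ := ihx; obtain ⟨t, ht, rfl⟩ := ihy
          exact ⟨s + t, Submodule.add_mem _ hs ht, map_add _ _ _⟩
      | smul q x hx ih =>
          obtain ⟨s, hs, rfl⟩ := ih
          refine ⟨algebraMap ℚ A q • s, Submodule.smul_mem _ _ hs, ?_⟩
          rw [map_smul, hAU, rat_smul_eq ι hAU]

end Transfer

theorem nablaPrime_highest_order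
    {A L U : Type*} [CommRing A] [Algebra ℚ A]
    [LieRing L] [Module A L] [Module.Projective A L]
    [Ring U] [Algebra ℚ U] [Module A U]
    (ι : A →+* U) (j : L → U) (ρ : L → A → A) (nab : L → L → L)
    (hAU : ∀ (a : A) (u : U), a • u = ι a * u)
    (hj_add : ∀ X Y : L, j (X + Y) = j X + j Y)
    (hj_smul : ∀ (a : A) (X : L), j (a • X) = ι a * j X)
    (hcomm : ∀ (X : L) (a : A), j X * ι a = ι a * j X + ι (ρ X a))
    (hbr : ∀ X Y : L, j X * j Y - j Y * j X = j ⁅X, Y⁆)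
    (hnab_smul₁ : ∀ (a : A) (X Y : L), nab (a • X) Y = a • nab X Y)
    (hnab_smul₂ : ∀ (a : A) (X Y : L), nab X (a • Y) = ρ X a • Y + a • nab X Y)
    (htf : ∀ X Y : L, nab X Y - nab Y X = ⁅X, Y⁆)
    (pbw : SymmAlgebra A L →ₗ[A] U)
    (hpbw : ∀ (n : ℕ) (X : Fin n → L), pbw (symMonomial A n X) = EMap j nab n X)
    (hbij : Function.Bijective pbw)
    (n : ℕ) (X₀ : L) (X : Fin (n + 1) → L) :
    (LinearEquiv.ofBijective pbw hbij).symm (j X₀ * pbw (symMonomial A (n + 1) X)) -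
        (ιSym A L X₀ * symMonomial A (n + 1) X +
          ∑ m : Fin (n + 1), symMonomial A (n + 1) (Function.update X m (nab X₀ (X m))))
      ∈ Sfil A L n := by
  have hr := keyS ι j ρ nab pbw hcomm hbr htf hpbw (n + 1) X₀ X
  have hr' : (j X₀ * EMap j nab (n + 1) X - EMap j nab (n + 1 + 1) (Fin.cons X₀ X)
      - ∑ p : Fin (n + 1), EMap j nab (n + 1) (Function.update X p (nab X₀ (X p))))
      ∈ Ffil ι j n := by simpa using hr
  obtain ⟨s, hs, hps⟩ := Ffil_sub_pbw ι j ρ nab pbw hAU hcomm hbr htf hpbw n _ hr'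
  have hkey : j X₀ * pbw (symMonomial A (n + 1) X)
      = (LinearEquiv.ofBijective pbw hbij)
          ((ιSym A L X₀ * symMonomial A (n + 1) X
            + ∑ m : Fin (n + 1), symMonomial A (n + 1) (Function.update X m (nab X₀ (X m)))) + s) := by
    rw [LinearEquiv.ofBijective_apply, map_add, map_add, map_sum, hps]
    have h1 : pbw (ιSym A L X₀ * symMonomial A (n + 1) X)
        = EMap j nab (n + 1 + 1) (Fin.cons X₀ X) := by
      rw [← symMonomial_cons, hpbw]
    rw [h1]
    simp only [hpbw]
    abel
  rw [hkey, LinearEquiv.symm_apply_apply, add_sub_cancel_left]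
  exact hs

end
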